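/- arXiv:2105.10550 — 2 statements merged into one kernel-verified Lean document; each statement's English description precedes it below -/
import Mathlib

section
/- Let X be a compact metrizable Cantor space (a compact metrizable space with a countable basis of clopen sets and no isolated points), let G be a countable discrete group, and let θ = (θ_g, X_g)_{g∈G} be a topological partial action of G on X such that every X_g is clopen in X. Then the enveloping space (2^X)_G of the induced partial action 2^θ on the hyperspace 2^X is a locally compact Cantor space, i.e. a locally compact Hausdorff space with a countable basis of clopen sets and no isolated points. -/
/-- The hyperspace `2^X` of nonempty compact subsets of `X`. -/
structure NCompact (X : Type*) [TopologicalSpace X] where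
  carrier : Set X
  isCompact' : IsCompact carrier
  nonempty' : carrier.Nonempty

/-- The Vietoris topology on the hyperspace `2^X`, generated by the subbasic open sets
`{A | A ⊆ U}` and `{A | A ∩ U ≠ ∅}` for `U` open in `X`. -/
instance NCompact.instTopologicalSpace (X : Type*) [TopologicalSpace X] :
    TopologicalSpace (NCompact X) :=
  TopologicalSpace.generateFrom
    {S | ∃ U : Set X, IsOpen U ∧
      (S = {A : NCompact X | A.carrier ⊆ U} ∨ S = {A : NCompact X | (A.carrier ∩ U).Nonempty})}

/-- A topological partial action `θ = (θ_g, X_g)_{g ∈ G}` of a topological group `G` on a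
topological space `X`: a family of open sets `dom g = X_g` and maps `map g = θ_g` which
restrict to homeomorphisms `θ_g : X_{g⁻¹} → X_g` (with inverse `θ_{g⁻¹}`), such that
`X_1 = X`, `θ_1 = id`, `θ_g(X_{g⁻¹} ∩ X_h) = X_g ∩ X_{gh}` and `θ_g ∘ θ_h = θ_{gh}` on
`X_{h⁻¹} ∩ X_{(gh)⁻¹}`.  (The values of `map g` outside `dom g⁻¹` are irrelevant junk.) -/
structure TopPartialAction (G : Type*) (X : Type*) [Group G] [TopologicalSpace G]
    [TopologicalSpace X] where
  dom : G → Set X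
  map : G → X → X
  isOpen_dom : ∀ g, IsOpen (dom g)
  dom_one : dom 1 = Set.univ
  map_one : ∀ x, map 1 x = x
  image_dom : ∀ g, map g '' dom g⁻¹ = dom g
  map_inv : ∀ g, ∀ x ∈ dom g⁻¹, map g⁻¹ (map g x) = x
  image_inter : ∀ g h, map g '' (dom g⁻¹ ∩ dom h) = dom g ∩ dom (g * h)
  map_mul : ∀ g h, ∀ x ∈ dom h⁻¹ ∩ dom (g * h)⁻¹, map g (map h x) = map (g * h) x
  continuousOn_map : ∀ g, ContinuousOn (map g) (dom g⁻¹)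

variable {G X : Type*} [Group G] [TopologicalSpace G] [TopologicalSpace X]

/-- The equivalence relation `R` on `G × X` defining the enveloping space `X_G = (G × X)/R`:
`(g,x) R (h,y)` iff `x ∈ X_{g⁻¹h}` and `θ_{h⁻¹g}(x) = y`. -/
def envRel (θ : TopPartialAction G X) (p q : G × X) : Prop :=
  p.2 ∈ θ.dom (p.1⁻¹ * q.1) ∧ θ.map (q.1⁻¹ * p.1) p.2 = q.2

/-- The relation `2^R` on `G × 2^X` defining the enveloping space `(2^X)_G` of the induced
partial action `2^θ`: `(g,A) 2^R (h,B)` iff `A ⊆ X_{g⁻¹h}` and `θ_{h⁻¹g}(A) = B`. -/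
def envRelH (θ : TopPartialAction G X) (p q : G × NCompact X) : Prop :=
  p.2.carrier ⊆ θ.dom (p.1⁻¹ * q.1) ∧ θ.map (q.1⁻¹ * p.1) '' p.2.carrier = q.2.carrier


namespace NCompact

variable {X : Type*} [TopologicalSpace X]

@[ext] lemma ext' {A B : NCompact X} (h : A.carrier = B.carrier) : A = B := by
  cases A; cases B; simpa using h

/-- `⟨U⟩ = {A | A ⊆ U}`. -/
def box (U : Set X) : Set (NCompact X) := {A | A.carrier ⊆ U}

/-- `{A | A ∩ U ≠ ∅}`. -/
def hit (U : Set X) : Set (NCompact X) := {A | (A.carrier ∩ U).Nonempty}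

lemma isOpen_box {U : Set X} (hU : IsOpen U) : IsOpen (box U) :=
  TopologicalSpace.isOpen_generateFrom_of_mem ⟨U, hU, Or.inl rfl⟩

lemma isOpen_hit {U : Set X} (hU : IsOpen U) : IsOpen (hit U) :=
  TopologicalSpace.isOpen_generateFrom_of_mem ⟨U, hU, Or.inr rfl⟩

lemma compl_box (U : Set X) : (box U)ᶜ = hit Uᶜ := by
  ext A
  simp [box, hit, Set.not_subset, Set.inter_compl_nonempty_iff]

lemma compl_hit (U : Set X) : (hit U)ᶜ = box Uᶜ := by
  ext A
  simp only [hit, box, Set.mem_compl_iff, Set.mem_setOf_eq, Set.not_nonempty_iff_eq_empty,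
    ← Set.disjoint_iff_inter_eq_empty, Set.disjoint_right, Set.subset_def, Set.mem_compl_iff]
  tauto

lemma isClosed_box {U : Set X} (hU : IsClosed U) : IsClosed (box U) := by
  rw [← isOpen_compl_iff, compl_box]; exact isOpen_hit hU.isOpen_compl

lemma isClosed_hit {U : Set X} (hU : IsClosed U) : IsClosed (hit U) := by
  rw [← isOpen_compl_iff, compl_hit]; exact isOpen_box hU.isOpen_compl

lemma isClopen_box {U : Set X} (hU : IsClopen U) : IsClopen (box U) :=
  ⟨isClosed_box hU.isClosed, isOpen_box hU.isOpen⟩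

lemma isClopen_hit {U : Set X} (hU : IsClopen U) : IsClopen (hit U) :=
  ⟨isClosed_hit hU.isClosed, isOpen_hit hU.isOpen⟩

lemma box_inter (U V : Set X) : box (U ∩ V) = box U ∩ box V := by
  ext A; simp [box, Set.subset_inter_iff]

lemma box_biInter {ι : Type*} (s : Set ι) (U : ι → Set X) :
    box (⋂ i ∈ s, U i) = ⋂ i ∈ s, box (U i) := by
  ext A; simp [box, Set.subset_iInter_iff]

end NCompact
namespace NCompact

open TopologicalSpace

variable {X : Type*} [TopologicalSpace X]

/-- Decomposition of Vietoris neighborhoods into standard basic sets. -/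
lemma exists_basic {W : Set (NCompact X)} (hW : IsOpen W) {A : NCompact X} (hA : A ∈ W) :
    ∃ (U₀ : Set X) (T : Set (Set X)), IsOpen U₀ ∧ T.Finite ∧ (∀ U ∈ T, IsOpen U) ∧
      A ∈ box U₀ ∩ ⋂ U ∈ T, hit U ∧ box U₀ ∩ ⋂ U ∈ T, hit U ⊆ W := by
  classical
  have hbasis := TopologicalSpace.isTopologicalBasis_of_subbasis
    (s := {S | ∃ U : Set X, IsOpen U ∧
      (S = {A : NCompact X | A.carrier ⊆ U} ∨ S = {A : NCompact X | (A.carrier ∩ U).Nonempty})})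
    (t := NCompact.instTopologicalSpace X) rfl
  obtain ⟨t, ht, hAt, htW⟩ := hbasis.exists_subset_of_mem_open hA hW
  obtain ⟨f, ⟨hffin, hfsub⟩, rfl⟩ := ht
  -- choose witnesses
  have hch : ∀ s : Set (NCompact X), ∃ U : Set X, s ∈ f →
      IsOpen U ∧ (s = box U ∨ s = hit U) := by
    intro s
    by_cases hs : s ∈ f
    · obtain ⟨U, hU, h⟩ := hfsub hs
      exact ⟨U, fun _ => ⟨hU, h⟩⟩
    · exact ⟨∅, fun h => absurd h hs⟩
  choose u hu using hch
  set fbox : Set (Set (NCompact X)) := {s ∈ f | s = box (u s)} with hfboxdef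
  set fhit : Set (Set (NCompact X)) := {s ∈ f | s ≠ box (u s)} with hfhitdef
  have hfb : ∀ s ∈ fbox, s = box (u s) := fun s hs => hs.2
  have hfh : ∀ s ∈ fhit, s = hit (u s) := by
    intro s hs
    rcases (hu s hs.1).2 with h | h
    · exact absurd h hs.2
    · exact h
  have hsplit : ⋂₀ f = box (⋂ s ∈ fbox, u s) ∩ ⋂ U ∈ u '' fhit, hit U := by
    rw [box_biInter]
    ext B
    simp only [Set.mem_sInter, Set.mem_inter_iff, Set.mem_iInter, Set.mem_image,
      forall_exists_index, and_imp]
    constructor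
    · intro h
      refine ⟨fun s hs => (hfb s hs) ▸ h s hs.1, ?_⟩
      rintro U s hs rfl
      exact (hfh s hs) ▸ h s hs.1
    · rintro ⟨h1, h2⟩ s hs
      by_cases hb : s = box (u s)
      · exact hb ▸ h1 s ⟨hs, hb⟩
      · exact (hfh s ⟨hs, hb⟩) ▸ h2 (u s) s ⟨hs, hb⟩ rfl
  refine ⟨⋂ s ∈ fbox, u s, u '' fhit, ?_, hffin.subset (fun s hs => hs.1) |>.image u, ?_, ?_, ?_⟩
  · exact (hffin.subset (fun s hs => hs.1)).isOpen_biInter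
      (fun s hs => (hu s hs.1).1)
  · rintro U ⟨s, hs, rfl⟩
    exact (hu s hs.1).1
  · rw [← hsplit]; exact hAt
  · rw [← hsplit]; exact htW

variable [T2Space X]

lemma t2space
    (hB : ∀ (x : X) (U : Set X), IsOpen U → x ∈ U → ∃ V, IsClopen V ∧ x ∈ V ∧ V ⊆ U) :
    T2Space (NCompact X) := by
  have key : ∀ A B : NCompact X, ∀ x, x ∈ A.carrier → x ∉ B.carrier →
      ∃ u v : Set (NCompact X), IsOpen u ∧ IsOpen v ∧ A ∈ u ∧ B ∈ v ∧ Disjoint u v := by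
    intro A B x hxA hxB
    obtain ⟨V, hV, hxV, hVsub⟩ := hB x B.carrierᶜ B.isCompact'.isClosed.isOpen_compl hxB
    refine ⟨hit V, box Vᶜ, isOpen_hit hV.isOpen, isOpen_box hV.isClosed.isOpen_compl,
      ⟨x, hxA, hxV⟩, fun y hy hyV => hVsub hyV hy, ?_⟩
    rw [Set.disjoint_left]
    rintro C ⟨y, hyC, hyV⟩ hC
    exact hC hyC hyV
  constructor
  intro A B hAB
  have hne : A.carrier ≠ B.carrier := fun h => hAB (ext' h)
  by_cases h : A.carrier ⊆ B.carrier
  · have h2 : ¬ B.carrier ⊆ A.carrier := fun h2 => hne (Set.Subset.antisymm h h2)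
    obtain ⟨x, hxB, hxA⟩ := Set.not_subset.1 h2
    obtain ⟨u, v, hu, hv, hBu, hAv, hd⟩ := key B A x hxB hxA
    exact ⟨v, u, hv, hu, hAv, hBu, hd.symm⟩
  · obtain ⟨x, hxA, hxB⟩ := Set.not_subset.1 h
    obtain ⟨u, v, hu, hv, hAu, hBv, hd⟩ := key A B x hxA hxB
    exact ⟨u, v, hu, hv, hAu, hBv, hd⟩

end NCompact
namespace NCompact

open TopologicalSpace

variable {X : Type*} [TopologicalSpace X] [T2Space X]

lemma infinite_of_isOpen (hperf : ∀ x : X, ¬ IsOpen ({x} : Set X))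
    {U : Set X} (hU : IsOpen U) (hne : U.Nonempty) : U.Infinite := by
  intro hfin
  obtain ⟨x, hx⟩ := hne
  have h1 : IsOpen ({x} : Set X) := by
    have : ({x} : Set X) = U \ (U \ {x}) := by
      rw [Set.diff_diff_cancel_left (Set.singleton_subset_iff.2 hx)]
    rw [this]
    exact hU.sdiff hfin.diff.isClosed
  exact hperf x h1

lemma not_isOpen_singleton
    (hB : ∀ (x : X) (U : Set X), IsOpen U → x ∈ U → ∃ V, IsClopen V ∧ x ∈ V ∧ V ⊆ U)
    (hperf : ∀ x : X, ¬ IsOpen ({x} : Set X))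
    (A : NCompact X) : ¬ IsOpen ({A} : Set (NCompact X)) := by
  classical
  intro hop
  obtain ⟨U₀, T, hU₀, hTfin, hTopen, ⟨hAbox, hAhit⟩, hsub⟩ :=
    exists_basic hop (Set.mem_singleton A)
  by_cases hcase : (U₀ \ A.carrier).Nonempty
  · obtain ⟨y, hyU, hyA⟩ := hcase
    set B : NCompact X := ⟨insert y A.carrier, A.isCompact'.insert y,
      ⟨y, Set.mem_insert _ _⟩⟩ with hBdef
    have hBmem : B ∈ box U₀ ∩ ⋂ U ∈ T, hit U := by
      refine ⟨Set.insert_subset hyU hAbox, ?_⟩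
      simp only [Set.mem_iInter] at hAhit ⊢
      intro U hU
      obtain ⟨z, hzA, hzU⟩ := hAhit U hU
      exact ⟨z, Set.mem_insert_of_mem _ hzA, hzU⟩
    have : B = A := hsub hBmem
    have : y ∈ A.carrier := by
      rw [← this]; exact Set.mem_insert _ _
    exact hyA this
  · -- U₀ ⊆ A.carrier, so A.carrier = U₀ is open
    have hU₀A : U₀ ⊆ A.carrier := by
      rw [Set.not_nonempty_iff_eq_empty, Set.diff_eq_empty] at hcase
      exact hcase
    have hAeq : A.carrier = U₀ := Set.Subset.antisymm hAbox hU₀A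
    have hAopen : IsOpen A.carrier := hAeq ▸ hU₀
    have hinf : A.carrier.Infinite := infinite_of_isOpen hperf hAopen A.nonempty'
    -- choose points in each A ∩ U for U ∈ T
    have hch : ∀ U : Set X, ∃ z : X, U ∈ T → z ∈ A.carrier ∩ U := by
      intro U
      by_cases hU : U ∈ T
      · simp only [Set.mem_iInter] at hAhit
        obtain ⟨z, hz⟩ := hAhit U hU
        exact ⟨z, fun _ => hz⟩
      · exact ⟨Classical.choice ⟨A.nonempty'.choose⟩, fun h => absurd h hU⟩
    choose ζ hζ using hch
    obtain ⟨z₀, hz₀⟩ := A.nonempty'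
    set F : Set X := insert z₀ (ζ '' T) with hFdef
    have hFfin : F.Finite := (hTfin.image ζ).insert z₀
    obtain ⟨x, hxA, hxF⟩ := (hinf.diff hFfin).nonempty
    obtain ⟨V, hV, hxV, hVsub⟩ := hB x (A.carrier \ F)
      (hAopen.sdiff hFfin.isClosed) ⟨hxA, hxF⟩
    have hz₀V : z₀ ∉ V := fun h => (hVsub h).2 (Set.mem_insert _ _)
    set B : NCompact X := ⟨A.carrier \ V, A.isCompact'.diff hV.isOpen, ⟨z₀, hz₀, hz₀V⟩⟩
      with hBdef
    have hBmem : B ∈ box U₀ ∩ ⋂ U ∈ T, hit U := by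
      refine ⟨fun y hy => hAbox hy.1, ?_⟩
      simp only [Set.mem_iInter]
      intro U hU
      have hz := hζ U hU
      have hzV : ζ U ∉ V := fun h => (hVsub h).2 (Set.mem_insert_of_mem _ ⟨U, hU, rfl⟩)
      exact ⟨ζ U, ⟨hz.1, hzV⟩, hz.2⟩
    have hBA : B = A := hsub hBmem
    have : x ∈ A.carrier \ V := by rw [show A.carrier \ V = B.carrier from rfl, hBA]; exact hxA
    exact this.2 hxV

end NCompact
namespace NCompact

open TopologicalSpace

variable {X : Type*} [TopologicalSpace X]

lemma exists_countable_clopen_basis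
    (hXbasis : ∃ B : Set (Set X), B.Countable ∧ (∀ U ∈ B, IsClopen U) ∧
      TopologicalSpace.IsTopologicalBasis B) :
    ∃ 𝔅 : Set (Set (NCompact X)), 𝔅.Countable ∧ (∀ b ∈ 𝔅, IsClopen b) ∧
      TopologicalSpace.IsTopologicalBasis 𝔅 := by
  classical
  obtain ⟨B0, hB0c, hB0clopen, hB0basis⟩ := hXbasis
  set 𝔅 : Set (Set (NCompact X)) :=
    {S | ∃ F T : Set (Set X), F.Finite ∧ F ⊆ B0 ∧ T.Finite ∧ T ⊆ B0 ∧
      S = box (⋃₀ F) ∩ ⋂ U ∈ T, hit U} with h𝔅def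
  have hcount : 𝔅.Countable := by
    have hP : {t : Set (Set X) | t.Finite ∧ t ⊆ B0}.Countable :=
      Set.countable_setOf_finite_subset hB0c
    have : 𝔅 ⊆ (fun p : Set (Set X) × Set (Set X) =>
        box (⋃₀ p.1) ∩ ⋂ U ∈ p.2, hit U) ''
        ({t | t.Finite ∧ t ⊆ B0} ×ˢ {t | t.Finite ∧ t ⊆ B0}) := by
      rintro S ⟨F, T, hF1, hF2, hT1, hT2, rfl⟩
      exact ⟨⟨F, T⟩, ⟨⟨hF1, hF2⟩, ⟨hT1, hT2⟩⟩, rfl⟩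
    exact ((hP.prod hP).image _).mono this
  have hclopen : ∀ b ∈ 𝔅, IsClopen b := by
    rintro b ⟨F, T, hF1, hF2, hT1, hT2, rfl⟩
    refine IsClopen.inter ?_ ?_
    · refine isClopen_box ?_
      rw [Set.sUnion_eq_biUnion]
      exact hF1.isClopen_biUnion fun U hU => hB0clopen U (hF2 hU)
    · exact hT1.isClopen_biInter fun U hU => isClopen_hit (hB0clopen U (hT2 hU))
  refine ⟨𝔅, hcount, hclopen, ?_⟩
  refine isTopologicalBasis_of_isOpen_of_nhds (fun b hb => (hclopen b hb).isOpen) ?_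
  intro A W hAW hW
  obtain ⟨U₀, T', hU₀, hT'fin, hT'open, ⟨hAbox, hAhit⟩, hsub⟩ := exists_basic hW hAW
  -- cover A.carrier by basic clopen sets inside U₀
  have hcover : ∀ x ∈ A.carrier, ∃ V ∈ B0, x ∈ V ∧ V ⊆ U₀ := by
    intro x hx
    obtain ⟨V, hV, hxV, hVsub⟩ := hB0basis.exists_subset_of_mem_open (hAbox hx) hU₀
    exact ⟨V, hV, hxV, hVsub⟩
  have hch : ∀ x : X, ∃ V : Set X, x ∈ A.carrier → V ∈ B0 ∧ x ∈ V ∧ V ⊆ U₀ := by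
    intro x
    by_cases hx : x ∈ A.carrier
    · obtain ⟨V, h1, h2, h3⟩ := hcover x hx
      exact ⟨V, fun _ => ⟨h1, h2, h3⟩⟩
    · exact ⟨∅, fun h => absurd h hx⟩
  choose v hv using hch
  have hsubcover : A.carrier ⊆ ⋃ x ∈ A.carrier, v x :=
    fun x hx => Set.mem_biUnion hx (hv x hx).2.1
  obtain ⟨s, hs, hsfin, hscov⟩ :=
    A.isCompact'.elim_finite_subcover_image (fun x hx => ((hB0clopen _ (hv x hx).1).isOpen))
      hsubcover
  set F : Set (Set X) := v '' s with hFdef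
  have hFfin : F.Finite := hsfin.image v
  have hFsub : F ⊆ B0 := by
    rintro V ⟨x, hx, rfl⟩
    exact (hv x (hs hx)).1
  have hAF : A.carrier ⊆ ⋃₀ F := by
    intro x hx
    obtain ⟨y, hy, hxy⟩ := Set.mem_iUnion₂.1 (hscov hx)
    exact ⟨v y, ⟨y, hy, rfl⟩, hxy⟩
  have hFU₀ : ⋃₀ F ⊆ U₀ := by
    rintro x ⟨V, ⟨y, hy, rfl⟩, hxV⟩
    exact (hv y (hs hy)).2.2 hxV
  -- choose basic hit sets
  simp only [Set.mem_iInter] at hAhit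
  have hch2 : ∀ U' : Set X, ∃ V : Set X, U' ∈ T' →
      V ∈ B0 ∧ (A.carrier ∩ V).Nonempty ∧ V ⊆ U' := by
    intro U'
    by_cases hU' : U' ∈ T'
    · obtain ⟨x, hxA, hxU⟩ := hAhit U' hU'
      obtain ⟨V, hV, hxV, hVsub⟩ := hB0basis.exists_subset_of_mem_open hxU (hT'open U' hU')
      exact ⟨V, fun _ => ⟨hV, ⟨x, hxA, hxV⟩, hVsub⟩⟩
    · exact ⟨∅, fun h => absurd h hU'⟩
  choose σ hσ using hch2
  refine ⟨box (⋃₀ F) ∩ ⋂ U ∈ σ '' T', hit U,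
    ⟨F, σ '' T', hFfin, hFsub, hT'fin.image σ, ?_, rfl⟩, ⟨hAF, ?_⟩, ?_⟩
  · rintro V ⟨U', hU', rfl⟩
    exact (hσ U' hU').1
  · simp only [Set.mem_iInter, Set.mem_image, forall_exists_index, and_imp]
    rintro V U' hU' rfl
    exact (hσ U' hU').2.1
  · intro B hB
    refine hsub ⟨fun x hx => hFU₀ (hB.1 hx), ?_⟩
    simp only [Set.mem_iInter]
    intro U' hU'
    have := hB.2
    simp only [Set.mem_iInter, Set.mem_image, forall_exists_index, and_imp] at this
    obtain ⟨x, hxB, hxσ⟩ := this (σ U') U' hU' rfl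
    exact ⟨x, hxB, (hσ U' hU').2.2 hxσ⟩

end NCompact
namespace NCompact

open TopologicalSpace Metric

lemma compactSpace (X : Type*) [TopologicalSpace X] [CompactSpace X]
    [TopologicalSpace.MetrizableSpace X] : CompactSpace (NCompact X) := by
  letI : MetricSpace X := TopologicalSpace.metrizableSpaceMetric X
  set f : TopologicalSpace.NonemptyCompacts X → NCompact X :=
    fun K => ⟨K.carrier, K.isCompact, K.nonempty⟩ with hfdef
  have hsurj : Function.Surjective f := fun A =>
    ⟨⟨⟨A.carrier, A.isCompact'⟩, A.nonempty'⟩, rfl⟩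
  have hcont : Continuous f := by
    rw [continuous_generateFrom_iff]
    rintro S ⟨U, hU, hS | hS⟩ <;> subst hS
    · -- preimage of box U
      rw [Metric.isOpen_iff]
      intro K hK
      obtain ⟨δ, hδ, hthick⟩ := K.isCompact.exists_thickening_subset_open hU hK
      refine ⟨δ, hδ, fun L hL => ?_⟩
      rw [mem_ball, Metric.NonemptyCompacts.dist_eq] at hL
      intro x hx
      obtain ⟨y, hy, hxy⟩ := Metric.exists_dist_lt_of_hausdorffDist_lt hx hL
        (Metric.hausdorffEdist_ne_top_of_nonempty_of_bounded L.nonempty K.nonempty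
          L.isCompact.isBounded K.isCompact.isBounded)
      exact hthick (Metric.mem_thickening_iff.2 ⟨y, hy, hxy⟩)
    · -- preimage of hit U
      rw [Metric.isOpen_iff]
      intro K hK
      obtain ⟨x, hxK, hxU⟩ := hK
      obtain ⟨ε, hε, hball⟩ := Metric.isOpen_iff.1 hU x hxU
      refine ⟨ε, hε, fun L hL => ?_⟩
      rw [mem_ball, Metric.NonemptyCompacts.dist_eq] at hL
      obtain ⟨y, hy, hxy⟩ := Metric.exists_dist_lt_of_hausdorffDist_lt
        (show x ∈ (K : Set X) from hxK)
        (show Metric.hausdorffDist (K : Set X) (L : Set X) < ε by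
          rwa [Metric.hausdorffDist_comm] at hL)
        (Metric.hausdorffEdist_ne_top_of_nonempty_of_bounded K.nonempty L.nonempty
          K.isCompact.isBounded L.isCompact.isBounded)
      exact ⟨y, hy, hball (by rwa [mem_ball, dist_comm])⟩
  constructor
  have : (Set.univ : Set (NCompact X)) = f '' Set.univ := by
    rw [Set.image_univ, hsurj.range_eq]
  rw [this]
  exact isCompact_univ.image hcont

end NCompact
namespace TopPartialAction

open NCompact

variable {G X : Type*} [Group G] [TopologicalSpace G] [TopologicalSpace X]
variable (θ : TopPartialAction G X)

open Classical in
/-- The induced map on the hyperspace. -/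
noncomputable def hmap (k : G) (A : NCompact X) : NCompact X :=
  if h : A.carrier ⊆ θ.dom k⁻¹ then
    ⟨θ.map k '' A.carrier,
      A.isCompact'.image_of_continuousOn ((θ.continuousOn_map k).mono h),
      A.nonempty'.image _⟩
  else A

lemma hmap_carrier {k : G} {A : NCompact X} (h : A.carrier ⊆ θ.dom k⁻¹) :
    (θ.hmap k A).carrier = θ.map k '' A.carrier := by
  rw [hmap]
  split
  · rfl
  · exact absurd h (by assumption)

lemma hmap_mem_box {k : G} {A : NCompact X} (h : A.carrier ⊆ θ.dom k⁻¹) :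
    (θ.hmap k A).carrier ⊆ θ.dom k := by
  rw [θ.hmap_carrier h, ← θ.image_dom k]
  exact Set.image_mono h

lemma hmap_hmap_inv {k : G} {A : NCompact X} (h : A.carrier ⊆ θ.dom k⁻¹) :
    θ.hmap k⁻¹ (θ.hmap k A) = A := by
  have h2 : (θ.hmap k A).carrier ⊆ θ.dom k⁻¹⁻¹ := by
    rw [inv_inv]; exact θ.hmap_mem_box h
  apply NCompact.ext'
  rw [θ.hmap_carrier h2, θ.hmap_carrier h, Set.image_image]
  have : ∀ x ∈ A.carrier, θ.map k⁻¹ (θ.map k x) = id x := fun x hx => θ.map_inv k x (h hx)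
  rw [Set.image_congr this, Set.image_id]

lemma hmap_one (A : NCompact X) : θ.hmap (1 : G) A = A := by
  have h : A.carrier ⊆ θ.dom (1 : G)⁻¹ := by
    rw [inv_one, θ.dom_one]; exact Set.subset_univ _
  apply NCompact.ext'
  rw [θ.hmap_carrier h]
  simp [θ.map_one, Set.image_id']

lemma continuousOn_hmap (k : G) : ContinuousOn (θ.hmap k) (box (θ.dom k⁻¹)) := by
  have hDopen : IsOpen (θ.dom k⁻¹) := θ.isOpen_dom k⁻¹
  rw [continuousOn_iff_continuous_restrict]
  rw [show (NCompact.instTopologicalSpace X) = TopologicalSpace.generateFrom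
    {S | ∃ U : Set X, IsOpen U ∧
      (S = {A : NCompact X | A.carrier ⊆ U} ∨ S = {A : NCompact X | (A.carrier ∩ U).Nonempty})}
      from rfl, continuous_generateFrom_iff]
  rintro S ⟨U, hU, hS | hS⟩ <;> subst hS
  · have hV : IsOpen (θ.dom k⁻¹ ∩ θ.map k ⁻¹' U) :=
      (θ.continuousOn_map k).isOpen_inter_preimage hDopen hU
    have : (box (θ.dom k⁻¹)).restrict (θ.hmap k) ⁻¹' {A | A.carrier ⊆ U} =
        Subtype.val ⁻¹' box (θ.dom k⁻¹ ∩ θ.map k ⁻¹' U) := by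
      ext ⟨A, hA⟩
      show (θ.hmap k A).carrier ⊆ U ↔ A.carrier ⊆ θ.dom k⁻¹ ∩ θ.map k ⁻¹' U
      rw [θ.hmap_carrier hA, Set.image_subset_iff]
      constructor
      · intro h
        exact Set.subset_inter hA h
      · intro h
        exact h.trans Set.inter_subset_right
    refine (congrArg IsOpen this).mpr ?_
    exact (isOpen_box hV).preimage continuous_subtype_val
  · have hV : IsOpen (θ.dom k⁻¹ ∩ θ.map k ⁻¹' U) :=
      (θ.continuousOn_map k).isOpen_inter_preimage hDopen hU
    have : (box (θ.dom k⁻¹)).restrict (θ.hmap k) ⁻¹' {A | (A.carrier ∩ U).Nonempty} =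
        Subtype.val ⁻¹' hit (θ.dom k⁻¹ ∩ θ.map k ⁻¹' U) := by
      ext ⟨A, hA⟩
      show ((θ.hmap k A).carrier ∩ U).Nonempty ↔ (A.carrier ∩ (θ.dom k⁻¹ ∩ θ.map k ⁻¹' U)).Nonempty
      rw [θ.hmap_carrier hA]
      constructor
      · rintro ⟨y, ⟨x, hxA, rfl⟩, hyU⟩
        exact ⟨x, hxA, hA hxA, hyU⟩
      · rintro ⟨x, hxA, _, hxU⟩
        exact ⟨θ.map k x, ⟨x, hxA, rfl⟩, hxU⟩
    refine (congrArg IsOpen this).mpr ?_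
    exact (isOpen_hit hV).preimage continuous_subtype_val

lemma isOpen_hmap_image {k : G} {S : Set (NCompact X)} (hS : IsOpen S) :
    IsOpen (θ.hmap k '' (S ∩ box (θ.dom k⁻¹))) := by
  have heq : θ.hmap k '' (S ∩ box (θ.dom k⁻¹)) =
      box (θ.dom k) ∩ θ.hmap k⁻¹ ⁻¹' (S ∩ box (θ.dom k⁻¹)) := by
    ext B
    constructor
    · rintro ⟨A, ⟨hAS, hAbox⟩, rfl⟩
      refine ⟨θ.hmap_mem_box hAbox, ?_⟩
      rw [Set.mem_preimage, θ.hmap_hmap_inv hAbox]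
      exact ⟨hAS, hAbox⟩
    · rintro ⟨hBbox, hBpre⟩
      rw [Set.mem_preimage] at hBpre
      have hBbox' : B.carrier ⊆ θ.dom k⁻¹⁻¹ := by rwa [inv_inv]
      refine ⟨θ.hmap k⁻¹ B, hBpre, ?_⟩
      have := θ.hmap_hmap_inv hBbox'
      rwa [inv_inv] at this
  rw [heq]
  have : IsOpen (S ∩ box (θ.dom k⁻¹)) := hS.inter (isOpen_box (θ.isOpen_dom _))
  have h2 := (θ.continuousOn_hmap k⁻¹).isOpen_inter_preimage (isOpen_box (θ.isOpen_dom _)) this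
  rwa [inv_inv] at h2

end TopPartialAction
section EnvRel

variable {G X : Type*} [Group G] [TopologicalSpace G] [TopologicalSpace X]
variable (θ : TopPartialAction G X)

lemma TopPartialAction.mem_dom_mul {a b : G} {x : X} (hxa : x ∈ θ.dom a)
    (hy : θ.map a⁻¹ x ∈ θ.dom b) :
    x ∈ θ.dom (a * b) ∧ θ.map b⁻¹ (θ.map a⁻¹ x) = θ.map (a * b)⁻¹ x := by
  have hxa' : x ∈ θ.dom a⁻¹⁻¹ := by rwa [inv_inv]
  have hyin : θ.map a⁻¹ x ∈ θ.dom a⁻¹ := by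
    rw [← θ.image_dom a⁻¹]
    exact ⟨x, hxa', rfl⟩
  have hmapx : θ.map a (θ.map a⁻¹ x) = x := by
    have := θ.map_inv a⁻¹ x hxa'
    rwa [inv_inv] at this
  have hxab : x ∈ θ.dom (a * b) := by
    have : x ∈ θ.map a '' (θ.dom a⁻¹ ∩ θ.dom b) := ⟨θ.map a⁻¹ x, ⟨hyin, hy⟩, hmapx⟩
    rw [θ.image_inter a b] at this
    exact this.2
  refine ⟨hxab, ?_⟩
  have := θ.map_mul b⁻¹ a⁻¹ x ⟨hxa', by rwa [← mul_inv_rev, inv_inv]⟩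
  rwa [← mul_inv_rev] at this
  
lemma envRelH_equivalence : Equivalence (envRelH θ) := by
  constructor
  · rintro ⟨g, A⟩
    refine ⟨?_, ?_⟩
    · simp [inv_mul_cancel, θ.dom_one]
    · simp only [inv_mul_cancel, θ.map_one]
      exact Set.image_id _ |>.trans rfl |>.symm ▸ (by simp [Set.image_id'])
  · rintro ⟨g, A⟩ ⟨h, B⟩ ⟨h1, h2⟩
    simp only [envRelH] at *
    have hinv : (h⁻¹ * g)⁻¹ = g⁻¹ * h := by group
    have h1' : A.carrier ⊆ θ.dom (h⁻¹ * g)⁻¹ := by rwa [hinv]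
    refine ⟨?_, ?_⟩
    · rw [← h2, ← θ.image_dom (h⁻¹ * g)]
      exact Set.image_mono h1'
    · rw [← h2, Set.image_image]
      have : ∀ x ∈ A.carrier, θ.map (g⁻¹ * h) (θ.map (h⁻¹ * g) x) = id x := by
        intro x hx
        have := θ.map_inv (h⁻¹ * g) x (h1' hx)
        rwa [hinv] at this
      rw [Set.image_congr this, Set.image_id]
  · rintro ⟨g, A⟩ ⟨h, B⟩ ⟨k, C⟩ ⟨h1, h2⟩ ⟨h3, h4⟩
    simp only [envRelH] at *
    have hab : (g⁻¹ * h) * (h⁻¹ * k) = g⁻¹ * k := by group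
    have hainv : h⁻¹ * g = (g⁻¹ * h)⁻¹ := by group
    have hbinv : k⁻¹ * h = (h⁻¹ * k)⁻¹ := by group
    have hcinv : k⁻¹ * g = ((g⁻¹ * h) * (h⁻¹ * k))⁻¹ := by group
    constructor
    · intro x hx
      have hy : θ.map (g⁻¹ * h)⁻¹ x ∈ θ.dom (h⁻¹ * k) := by
        apply h3
        rw [← h2, ← hainv]
        exact ⟨x, hx, rfl⟩
      have := (θ.mem_dom_mul (h1 hx) hy).1
      rwa [hab] at this
    · rw [← h4, ← h2, Set.image_image]
      have : ∀ x ∈ A.carrier, θ.map (k⁻¹ * h) (θ.map (h⁻¹ * g) x) = θ.map (k⁻¹ * g) x := by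
        intro x hx
        have hy : θ.map (g⁻¹ * h)⁻¹ x ∈ θ.dom (h⁻¹ * k) := by
          apply h3
          rw [← h2, ← hainv]
          exact ⟨x, hx, rfl⟩
        have := (θ.mem_dom_mul (h1 hx) hy).2
        rw [hainv, hbinv, hcinv]
        exact this
      exact (Set.image_congr this).symm

lemma envRelH_iff {g h : G} {A B : NCompact X} :
    envRelH θ (g, A) (h, B) ↔
      A.carrier ⊆ θ.dom (g⁻¹ * h) ∧ θ.map (h⁻¹ * g) '' A.carrier = B.carrier :=
  Iff.rfl

lemma envRelH_hmap_eq {g h : G} {A B : NCompact X} (hR : envRelH θ (g, A) (h, B)) :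
    θ.hmap (h⁻¹ * g) A = B := by
  have hA : A.carrier ⊆ θ.dom (h⁻¹ * g)⁻¹ := by
    rw [show (h⁻¹ * g)⁻¹ = g⁻¹ * h by group]
    exact hR.1
  exact NCompact.ext' ((θ.hmap_carrier hA).trans hR.2)

lemma envRelH_of_hmap {g h : G} {A : NCompact X} (hA : A.carrier ⊆ θ.dom (g⁻¹ * h)) :
    envRelH θ (g, A) (h, θ.hmap (h⁻¹ * g) A) := by
  have hA' : A.carrier ⊆ θ.dom (h⁻¹ * g)⁻¹ := by
    rw [show (h⁻¹ * g)⁻¹ = g⁻¹ * h by group]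
    exact hA
  exact ⟨hA, (θ.hmap_carrier hA').symm⟩

end EnvRel
/-- Let `X` be a compact metrizable Cantor space (compact, metrizable, with a countable basis
of clopen sets and no isolated points), let `G` be a countable discrete group, and let `θ` be
a topological partial action of `G` on `X` with every `X_g` clopen.  Then the enveloping
space `(2^X)_G` of the induced partial action on the hyperspace `2^X` is a locally compact
Cantor space: locally compact, Hausdorff, with a countable basis of clopen sets and no
isolated points. -/
theorem envelopingSpace_hyperspace_locallyCompactCantor
    {G X : Type*} [Group G] [TopologicalSpace G] [IsTopologicalGroup G]
    [Countable G] [DiscreteTopology G]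
    [TopologicalSpace X] [CompactSpace X] [TopologicalSpace.MetrizableSpace X]
    (hXbasis : ∃ B : Set (Set X), B.Countable ∧ (∀ U ∈ B, IsClopen U) ∧
      TopologicalSpace.IsTopologicalBasis B)
    (hXperfect : ∀ x : X, ¬ IsOpen ({x} : Set X))
    (θ : TopPartialAction G X)
    (hclopen : ∀ g, IsClopen (θ.dom g)) :
    LocallyCompactSpace (Quot (envRelH θ)) ∧ T2Space (Quot (envRelH θ)) ∧
      (∃ B : Set (Set (Quot (envRelH θ))), B.Countable ∧ (∀ U ∈ B, IsClopen U) ∧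
        TopologicalSpace.IsTopologicalBasis B) ∧
      ∀ y : Quot (envRelH θ), ¬ IsOpen ({y} : Set (Quot (envRelH θ))) := by
  classical
  obtain ⟨B0, hB0c, hB0clopen, hB0basis⟩ := hXbasis
  have hBprop : ∀ (x : X) (U : Set X), IsOpen U → x ∈ U → ∃ V, IsClopen V ∧ x ∈ V ∧ V ⊆ U := by
    intro x U hU hx
    obtain ⟨V, hV, hxV, hVU⟩ := hB0basis.exists_subset_of_mem_open hx hU
    exact ⟨V, hB0clopen V hV, hxV, hVU⟩
  haveI hT2H : T2Space (NCompact X) := NCompact.t2space hBprop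
  haveI hcptH : CompactSpace (NCompact X) := NCompact.compactSpace X
  obtain ⟨𝔅, h𝔅c, h𝔅clopen, h𝔅basis⟩ :=
    NCompact.exists_countable_clopen_basis ⟨B0, hB0c, hB0clopen, hB0basis⟩
  have hperfH : ∀ A : NCompact X, ¬ IsOpen ({A} : Set (NCompact X)) :=
    NCompact.not_isOpen_singleton hBprop hXperfect
  have hequiv := envRelH_equivalence θ
  set R := envRelH θ with hRdef
  set q : G × NCompact X → Quot R := Quot.mk R with hqdef
  have hqeq : ∀ p p', q p = q p' ↔ R p p' := fun p p' =>
    (Quot.eq).trans hequiv.eqvGen_iff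
  have hqcont : Continuous q := continuous_quot_mk
  -- saturations of open sets are open
  have hsat : ∀ W : Set (G × NCompact X), IsOpen W → IsOpen {p | ∃ w ∈ W, R w p} := by
    intro W hW
    rw [isOpen_iff_forall_mem_open]
    rintro ⟨h, B⟩ ⟨⟨g, A⟩, hgAW, hR⟩
    set k := h⁻¹ * g with hk
    have hkinv : k⁻¹ = g⁻¹ * h := by rw [hk]; group
    have hAdom : A.carrier ⊆ θ.dom k⁻¹ := by rw [hkinv]; exact hR.1
    have hBeq : θ.hmap k A = B := envRelH_hmap_eq θ hR
    have hslice : IsOpen {A' : NCompact X | (g, A') ∈ W} :=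
      hW.preimage (Continuous.prodMk_right g)
    refine ⟨{h} ×ˢ (θ.hmap k '' ({A' | (g, A') ∈ W} ∩ NCompact.box (θ.dom k⁻¹))), ?_, ?_, ?_⟩
    · rintro ⟨h', B'⟩ ⟨hh', A', ⟨hA'W, hA'dom⟩, rfl⟩
      simp only [Set.mem_singleton_iff] at hh'
      subst hh'
      refine ⟨(g, A'), hA'W, ?_⟩
      exact envRelH_of_hmap θ (by rw [← hkinv]; exact hA'dom)
    · exact (isOpen_discrete _).prod (θ.isOpen_hmap_image hslice)
    · exact ⟨rfl, A, ⟨hgAW, hAdom⟩, hBeq⟩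
  -- q is an open map
  have hqpre : ∀ W : Set (G × NCompact X), q ⁻¹' (q '' W) = {p | ∃ w ∈ W, R w p} := by
    intro W
    ext p
    simp only [Set.mem_preimage, Set.mem_image, Set.mem_setOf_eq]
    constructor
    · rintro ⟨w, hw, hqw⟩
      exact ⟨w, hw, (hqeq w p).1 hqw⟩
    · rintro ⟨w, hw, hR⟩
      exact ⟨w, hw, (hqeq w p).2 hR⟩
  have hopenmap : ∀ W : Set (G × NCompact X), IsOpen W → IsOpen (q '' W) := by
    intro W hW
    rw [← isQuotientMap_quot_mk.isOpen_preimage]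
    rw [show Quot.mk R ⁻¹' (q '' W) = {p | ∃ w ∈ W, R w p} from hqpre W]
    exact hsat W hW
  -- key chart lemma
  have hchart : ∀ (y : Quot R) (n : Set (Quot R)), IsOpen n → y ∈ n →
      ∃ (g : G) (b : Set (NCompact X)), b ∈ 𝔅 ∧ y ∈ q '' ({g} ×ˢ b) ∧ q '' ({g} ×ˢ b) ⊆ n := by
    intro y n hn hyn
    obtain ⟨⟨g, A⟩, rfl⟩ := Quot.exists_rep y
    have hopen : IsOpen {A' : NCompact X | (g, A') ∈ q ⁻¹' n} :=
      (hn.preimage hqcont).preimage (Continuous.prodMk_right g)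
    have hA : A ∈ {A' : NCompact X | (g, A') ∈ q ⁻¹' n} := hyn
    obtain ⟨b, hb, hAb, hbsub⟩ := h𝔅basis.exists_subset_of_mem_open hA hopen
    refine ⟨g, b, hb, ⟨(g, A), ⟨rfl, hAb⟩, rfl⟩, ?_⟩
    rintro z ⟨⟨g', A'⟩, ⟨hg', hA'⟩, rfl⟩
    simp only [Set.mem_singleton_iff] at hg'
    subst hg'
    exact hbsub hA'
  refine ⟨?_, ?_, ?_, ?_⟩
  · -- locally compact
    constructor
    intro y n hn
    obtain ⟨n', hn'sub, hn'open, hyn'⟩ := mem_nhds_iff.1 hn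
    obtain ⟨g, b, hb, hyb, hbsub⟩ := hchart y n' hn'open hyn'
    refine ⟨q '' ({g} ×ˢ b), ?_, hbsub.trans hn'sub, ?_⟩
    · exact (hopenmap _ ((isOpen_discrete _).prod (h𝔅clopen b hb).isOpen)).mem_nhds hyb
    · exact (isCompact_singleton.prod (h𝔅clopen b hb).isClosed.isCompact).image hqcont
  · -- T2
    constructor
    intro y1 y2 hne
    obtain ⟨⟨g, A⟩, rfl⟩ := Quot.exists_rep y1
    obtain ⟨⟨h, B⟩, rfl⟩ := Quot.exists_rep y2
    have hR : ¬ R (g, A) (h, B) := fun hR => hne (Quot.sound hR)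
    by_cases hc : A.carrier ⊆ θ.dom (g⁻¹ * h)
    · set k := h⁻¹ * g with hk
      have hkinv : k⁻¹ = g⁻¹ * h := by rw [hk]; group
      have hBne : θ.hmap k A ≠ B := fun he => hR (he ▸ envRelH_of_hmap θ hc)
      obtain ⟨u, v, hu, hv, hmemu, hmemv, hd⟩ := t2_separation hBne
      have hO₁ : IsOpen (NCompact.box (θ.dom k⁻¹) ∩ θ.hmap k ⁻¹' u) :=
        (θ.continuousOn_hmap k).isOpen_inter_preimage
          (NCompact.isOpen_box (θ.isOpen_dom _)) hu
      refine ⟨q '' ({g} ×ˢ (NCompact.box (θ.dom k⁻¹) ∩ θ.hmap k ⁻¹' u)),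
        q '' ({h} ×ˢ v),
        hopenmap _ ((isOpen_discrete _).prod hO₁),
        hopenmap _ ((isOpen_discrete _).prod hv),
        ⟨(g, A), ⟨rfl, ⟨by rw [hkinv]; exact hc, hmemu⟩⟩, rfl⟩,
        ⟨(h, B), ⟨rfl, hmemv⟩, rfl⟩, ?_⟩
      rw [Set.disjoint_left]
      rintro z ⟨⟨g', A'⟩, ⟨hg', hA'dom, hA'u⟩, rfl⟩ ⟨⟨h', B'⟩, ⟨hh', hB'v⟩, hz⟩
      simp only [Set.mem_singleton_iff] at hg' hh'
      subst hg'; subst hh'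
      have hRz := (hqeq _ _).1 hz.symm
      have hB'eq := (envRelH_hmap_eq θ hRz).symm
      exact Set.disjoint_left.1 hd hA'u (hB'eq ▸ hB'v)
    · refine ⟨q '' ({g} ×ˢ NCompact.hit (θ.dom (g⁻¹ * h))ᶜ),
        q '' ({h} ×ˢ (Set.univ : Set (NCompact X))),
        hopenmap _ ((isOpen_discrete _).prod
          (NCompact.isOpen_hit (hclopen (g⁻¹ * h)).isClosed.isOpen_compl)),
        hopenmap _ ((isOpen_discrete _).prod isOpen_univ),
        ⟨(g, A), ⟨rfl, ?_⟩, rfl⟩, ⟨(h, B), ⟨rfl, trivial⟩, rfl⟩, ?_⟩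
      · obtain ⟨x, hxA, hxd⟩ := Set.not_subset.1 hc
        exact ⟨x, hxA, hxd⟩
      · rw [Set.disjoint_left]
        rintro z ⟨⟨g', A'⟩, ⟨hg', hA'⟩, rfl⟩ ⟨⟨h', B'⟩, ⟨hh', _⟩, hz⟩
        simp only [Set.mem_singleton_iff] at hg' hh'
        subst hg'; subst hh'
        have hRz := (hqeq _ _).1 hz.symm
        obtain ⟨x, hxA', hxd⟩ := hA'
        exact hxd (hRz.1 hxA')
  · -- countable clopen basis
    refine ⟨{S | ∃ (g : G) (b : Set (NCompact X)), b ∈ 𝔅 ∧ S = q '' ({g} ×ˢ b)}, ?_, ?_, ?_⟩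
    · have hsub : {S | ∃ (g : G) (b : Set (NCompact X)), b ∈ 𝔅 ∧ S = q '' ({g} ×ˢ b)} ⊆
          (fun p : G × Set (NCompact X) => q '' ({p.1} ×ˢ p.2)) ''
            ((Set.univ : Set G) ×ˢ 𝔅) := by
        rintro S ⟨g, b, hb, rfl⟩
        exact ⟨(g, b), ⟨trivial, hb⟩, rfl⟩
      exact ((Set.countable_univ.prod h𝔅c).image _).mono hsub
    · rintro S ⟨g, b, hb, rfl⟩
      refine ⟨?_, hopenmap _ ((isOpen_discrete _).prod (h𝔅clopen b hb).isOpen)⟩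
      rw [← isOpen_compl_iff, ← isQuotientMap_quot_mk.isOpen_preimage, Set.preimage_compl]
      rw [show Quot.mk R ⁻¹' (q '' ({g} ×ˢ b)) = {p | ∃ w ∈ {g} ×ˢ b, R w p} from hqpre _]
      rw [isOpen_iff_forall_mem_open]
      rintro ⟨h, B⟩ hmem
      set k := h⁻¹ * g with hk
      have hkinv : k⁻¹ = g⁻¹ * h := by rw [hk]; group
      set C := θ.hmap k '' (b ∩ NCompact.box (θ.dom k⁻¹)) with hC
      have hCcompact : IsCompact C :=
        (((h𝔅clopen b hb).isClosed.inter
          (NCompact.isClosed_box (hclopen k⁻¹).isClosed)).isCompact).image_of_continuousOn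
          ((θ.continuousOn_hmap k).mono Set.inter_subset_right)
      refine ⟨{h} ×ˢ Cᶜ, ?_, (isOpen_discrete _).prod hCcompact.isClosed.isOpen_compl, ?_⟩
      · rintro ⟨h', B'⟩ ⟨hh', hB'⟩
        simp only [Set.mem_singleton_iff] at hh'
        subst hh'
        rintro ⟨⟨g'', A''⟩, ⟨hg'', hA''b⟩, hRw⟩
        simp only [Set.mem_singleton_iff] at hg''
        subst hg''
        apply hB'
        have hA''dom : A''.carrier ⊆ θ.dom k⁻¹ := by rw [hkinv]; exact hRw.1
        exact ⟨A'', ⟨hA''b, hA''dom⟩, envRelH_hmap_eq θ hRw⟩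
      · refine ⟨rfl, ?_⟩
        rintro ⟨A', ⟨hA'b, hA'dom⟩, hBeq⟩
        apply hmem
        refine ⟨(g, A'), ⟨rfl, hA'b⟩, ?_⟩
        have := envRelH_of_hmap θ (g := g) (h := h) (A := A') (by rw [← hkinv]; exact hA'dom)
        rwa [show θ.hmap (h⁻¹ * g) A' = B from hBeq] at this
    · refine TopologicalSpace.isTopologicalBasis_of_isOpen_of_nhds ?_ ?_
      · rintro S ⟨g, b, hb, rfl⟩
        exact hopenmap _ ((isOpen_discrete _).prod (h𝔅clopen b hb).isOpen)
      · intro y n hyn hn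
        obtain ⟨g, b, hb, hyb, hbsub⟩ := hchart y n hn hyn
        exact ⟨q '' ({g} ×ˢ b), ⟨g, b, hb, rfl⟩, hyb, hbsub⟩
  · -- no isolated points
    intro y hop
    obtain ⟨⟨g, A⟩, rfl⟩ := Quot.exists_rep y
    have hopen : IsOpen {A' : NCompact X | (g, A') ∈ q ⁻¹' {Quot.mk R (g, A)}} :=
      (hop.preimage hqcont).preimage (Continuous.prodMk_right g)
    have hsub : {A' : NCompact X | (g, A') ∈ q ⁻¹' {Quot.mk R (g, A)}} ⊆ {A} := by
      intro A' hA'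
      have hRz : R (g, A') (g, A) := (hqeq _ _).1 hA'
      have := envRelH_hmap_eq θ hRz
      rw [inv_mul_cancel, θ.hmap_one] at this
      exact this
    have hmem : A ∈ {A' : NCompact X | (g, A') ∈ q ⁻¹' {Quot.mk R (g, A)}} := rfl
    have : {A' : NCompact X | (g, A') ∈ q ⁻¹' {Quot.mk R (g, A)}} = {A} :=
      Set.Subset.antisymm hsub (Set.singleton_subset_iff.2 hmem)
    exact hperfH A (this ▸ hopen)
end

section
/- Let θ = (θ_g, X_g)_{g∈G} be a topological partial action of a topological group G on a compact Hausdorff space X, with enveloping space X_G, and let F(X)_G be the enveloping space of the induced partial action on the hyperspace F(X) of nonempty finite subsets of X. Then F(X)_G is a T1 space if and only if X_G is a T1 space. -/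
variable {G X : Type*} [Group G] [TopologicalSpace G] [TopologicalSpace X]

/-- The hyperspace `F(X)` of nonempty finite subsets of `X`, with the subspace topology
inherited from the Vietoris topology on `2^X`. -/
def FinHyper (X : Type*) [TopologicalSpace X] : Type _ :=
  {A : NCompact X // A.carrier.Finite}

instance (X : Type*) [TopologicalSpace X] : TopologicalSpace (FinHyper X) :=
  instTopologicalSpaceSubtype

/-- The relation `2^R` on `G × F(X)` defining the enveloping space `F(X)_G` of the induced
partial action on `F(X)`: `(g,A) 2^R (h,B)` iff `A ⊆ X_{g⁻¹h}` and `θ_{h⁻¹g}(A) = B`. -/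
def envRelF (θ : TopPartialAction G X) (p q : G × FinHyper X) : Prop :=
  p.2.1.carrier ⊆ θ.dom (p.1⁻¹ * q.1) ∧ θ.map (q.1⁻¹ * p.1) '' p.2.1.carrier = q.2.1.carrier

section Aux
set_option linter.unusedSectionVars false

variable {G X : Type*} [Group G] [TopologicalSpace G] [TopologicalSpace X]

namespace TopPartialAction

variable (θ : TopPartialAction G X)

lemma aux_map_mem_dom_inv {a : G} {x : X} (hx : x ∈ θ.dom a) : θ.map a⁻¹ x ∈ θ.dom a⁻¹ := by
  rw [← θ.image_dom a⁻¹]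
  exact ⟨x, by rwa [inv_inv], rfl⟩

lemma aux_map_map_inv {a : G} {x : X} (hx : x ∈ θ.dom a) : θ.map a (θ.map a⁻¹ x) = x := by
  have := θ.map_inv a⁻¹ x (by rwa [inv_inv])
  rwa [inv_inv] at this

lemma aux_key {a b : G} {x : X} (hx : x ∈ θ.dom a) (hy : θ.map a⁻¹ x ∈ θ.dom b) :
    x ∈ θ.dom (a * b) ∧ θ.map (a * b)⁻¹ x = θ.map b⁻¹ (θ.map a⁻¹ x) := by
  have h1 : θ.map a⁻¹ x ∈ θ.dom a⁻¹ ∩ θ.dom b := ⟨θ.aux_map_mem_dom_inv hx, hy⟩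
  have h2 : x ∈ θ.dom a ∩ θ.dom (a * b) := by
    rw [← θ.image_inter a b]
    exact ⟨θ.map a⁻¹ x, h1, θ.aux_map_map_inv hx⟩
  refine ⟨h2.2, ?_⟩
  have h3 := θ.map_mul b⁻¹ a⁻¹ x (by simp only [mul_inv_rev, inv_inv]; exact h2)
  rw [mul_inv_rev]
  exact h3.symm

lemma envRel_equivalence : Equivalence (envRel θ) := by
  constructor
  · intro p
    exact ⟨by simp [θ.dom_one], by simp [θ.map_one]⟩
  · rintro ⟨g, x⟩ ⟨h, y⟩ ⟨hd, hm⟩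
    dsimp only at hd hm
    have hd' : x ∈ θ.dom ((h⁻¹ * g)⁻¹) := by rwa [mul_inv_rev, inv_inv]
    constructor
    · show y ∈ θ.dom (h⁻¹ * g)
      rw [← hm, ← θ.image_dom (h⁻¹ * g)]
      exact ⟨x, hd', rfl⟩
    · show θ.map (g⁻¹ * h) y = x
      rw [← hm]
      have := θ.map_inv (h⁻¹ * g) x hd'
      rwa [mul_inv_rev, inv_inv] at this
  · rintro ⟨g, x⟩ ⟨h, y⟩ ⟨k, z⟩ ⟨hd1, hm1⟩ ⟨hd2, hm2⟩
    dsimp only at hd1 hm1 hd2 hm2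
    have ha : x ∈ θ.dom (g⁻¹ * h) := hd1
    have hb : θ.map (g⁻¹ * h)⁻¹ x ∈ θ.dom (h⁻¹ * k) := by
      rwa [mul_inv_rev, inv_inv, hm1]
    obtain ⟨hkd, hkm⟩ := θ.aux_key ha hb
    have e1 : g⁻¹ * h * (h⁻¹ * k) = g⁻¹ * k := by group
    have e2 : (g⁻¹ * h)⁻¹ = h⁻¹ * g := by group
    have e3 : (h⁻¹ * k)⁻¹ = k⁻¹ * h := by group
    have e4 : (g⁻¹ * k)⁻¹ = k⁻¹ * g := by group
    rw [e1] at hkd hkm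
    rw [e2, e3, e4, hm1] at hkm
    exact ⟨hkd, by rw [hkm, hm2]⟩

lemma envRelF_iff (p q : G × FinHyper X) :
    envRelF θ p q ↔ (∀ b ∈ q.2.1.carrier, ∃ x ∈ p.2.1.carrier, envRel θ (p.1, x) (q.1, b)) ∧
      (∀ x ∈ p.2.1.carrier, ∃ b ∈ q.2.1.carrier, envRel θ (p.1, x) (q.1, b)) := by
  obtain ⟨g, A⟩ := p
  obtain ⟨h, B⟩ := q
  constructor
  · rintro ⟨hsub, himg⟩
    constructor
    · intro b hb
      rw [← himg] at hb
      obtain ⟨x, hx, rfl⟩ := hb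
      exact ⟨x, hx, hsub hx, rfl⟩
    · intro x hx
      exact ⟨θ.map (h⁻¹ * g) x, by rw [← himg]; exact ⟨x, hx, rfl⟩, hsub hx, rfl⟩
  · rintro ⟨h1, h2⟩
    constructor
    · intro x hx
      obtain ⟨b, _, hd, _⟩ := h2 x hx
      exact hd
    · apply Set.Subset.antisymm
      · rintro _ ⟨x, hx, rfl⟩
        obtain ⟨b, hb, _, hm⟩ := h2 x hx
        rwa [hm]
      · intro b hb
        obtain ⟨x, hx, _, hm⟩ := h1 b hb
        exact ⟨x, hx, hm⟩

lemma envRelF_equivalence : Equivalence (envRelF θ) := by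
  have E := θ.envRel_equivalence
  constructor
  · intro p
    rw [envRelF_iff]
    exact ⟨fun b hb => ⟨b, hb, E.refl _⟩, fun x hx => ⟨x, hx, E.refl _⟩⟩
  · intro p q hpq
    rw [envRelF_iff] at hpq ⊢
    exact ⟨fun b hb => (hpq.2 b hb).imp fun x ⟨hx, hr⟩ => ⟨hx, E.symm hr⟩,
      fun x hx => (hpq.1 x hx).imp fun b ⟨hb, hr⟩ => ⟨hb, E.symm hr⟩⟩
  · intro p q r hpq hqr
    rw [envRelF_iff] at hpq hqr ⊢
    constructor
    · intro b hb
      obtain ⟨y, hy, hr2⟩ := hqr.1 b hb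
      obtain ⟨x, hx, hr1⟩ := hpq.1 y hy
      exact ⟨x, hx, E.trans hr1 hr2⟩
    · intro x hx
      obtain ⟨y, hy, hr1⟩ := hpq.2 x hx
      obtain ⟨b, hb, hr2⟩ := hqr.2 y hy
      exact ⟨b, hb, E.trans hr1 hr2⟩

end TopPartialAction

lemma aux_isOpen_sub {U : Set X} (hU : IsOpen U) : IsOpen {A : NCompact X | A.carrier ⊆ U} :=
  TopologicalSpace.isOpen_generateFrom_of_mem ⟨U, hU, Or.inl rfl⟩

lemma aux_isOpen_hit {U : Set X} (hU : IsOpen U) :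
    IsOpen {A : NCompact X | (A.carrier ∩ U).Nonempty} :=
  TopologicalSpace.isOpen_generateFrom_of_mem ⟨U, hU, Or.inr rfl⟩

lemma aux_isClosed_class {α : Type*} [TopologicalSpace α] {r : α → α → Prop}
    (hr : Equivalence r) [T1Space (Quot r)] (p : α) : IsClosed {q | r p q} := by
  have : {q | r p q} = Quot.mk r ⁻¹' {Quot.mk r p} := by
    ext q
    simp only [Set.mem_setOf_eq, Set.mem_preimage, Set.mem_singleton_iff, Quot.eq,
      hr.eqvGen_iff]
    exact ⟨hr.symm, hr.symm⟩
  rw [this]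
  exact isClosed_singleton.preimage continuous_quot_mk

lemma aux_t1_of_classes {α : Type*} [TopologicalSpace α] {r : α → α → Prop}
    (hr : Equivalence r) (h : ∀ p, IsClosed {q | r p q}) : T1Space (Quot r) := by
  refine ⟨fun x => ?_⟩
  obtain ⟨p, rfl⟩ := Quot.exists_rep x
  rw [← isQuotientMap_quot_mk.isClosed_preimage]
  have : Quot.mk r ⁻¹' {Quot.mk r p} = {q | r p q} := by
    ext q
    simp only [Set.mem_setOf_eq, Set.mem_preimage, Set.mem_singleton_iff, Quot.eq,
      hr.eqvGen_iff]
    exact ⟨hr.symm, hr.symm⟩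
  rw [this]
  exact h p

lemma aux_isClosed_vforall {K : Set (G × X)} (hK : IsClosed K) :
    IsClosed {p : G × NCompact X | ∀ b ∈ p.2.carrier, (p.1, b) ∈ K} := by
  rw [← isOpen_compl_iff]
  rw [isOpen_iff_forall_mem_open]
  rintro ⟨h, B⟩ hp
  simp only [Set.mem_compl_iff, Set.mem_setOf_eq, not_forall] at hp
  obtain ⟨b, hb, hbK⟩ := hp
  obtain ⟨V, U, hV, hU, hhV, hbU, hVU⟩ :=
    generalized_tube_lemma isCompact_singleton isCompact_singleton hK.isOpen_compl
      (by
        rintro ⟨h', b'⟩ ⟨hh', hb''⟩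
        rw [Set.mem_singleton_iff] at hh' hb''
        subst hh'; subst hb''; exact hbK)
  refine ⟨V ×ˢ {A : NCompact X | (A.carrier ∩ U).Nonempty}, ?_, hV.prod (aux_isOpen_hit hU),
    ⟨hhV rfl, b, hb, hbU rfl⟩⟩
  rintro ⟨h', B'⟩ ⟨hh', b', hb', hb'U⟩
  simp only [Set.mem_compl_iff, Set.mem_setOf_eq, not_forall]
  exact ⟨b', hb', hVU ⟨hh', hb'U⟩⟩

lemma aux_isClosed_vexists {K : Set (G × X)} (hK : IsClosed K) :
    IsClosed {p : G × NCompact X | ∃ b ∈ p.2.carrier, (p.1, b) ∈ K} := by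
  rw [← isOpen_compl_iff]
  rw [isOpen_iff_forall_mem_open]
  rintro ⟨h, B⟩ hp
  simp only [Set.mem_compl_iff, Set.mem_setOf_eq] at hp
  push_neg at hp
  obtain ⟨V, U, hV, hU, hhV, hBU, hVU⟩ :=
    generalized_tube_lemma isCompact_singleton B.isCompact' hK.isOpen_compl
      (by
        rintro ⟨h', b'⟩ ⟨hh', hb'⟩
        rw [Set.mem_singleton_iff] at hh'
        subst hh'
        exact hp b' hb')
  refine ⟨V ×ˢ {A : NCompact X | A.carrier ⊆ U}, ?_, hV.prod (aux_isOpen_sub hU),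
    ⟨hhV rfl, hBU⟩⟩
  rintro ⟨h', B'⟩ ⟨hh', hsub⟩
  simp only [Set.mem_compl_iff, Set.mem_setOf_eq]
  push_neg
  intro b' hb'
  exact fun hK' => absurd (hVU (show (h', b') ∈ V ×ˢ U from ⟨hh', hsub hb'⟩)) (by simp [hK'])

lemma aux_continuous_val : Continuous (fun p : G × FinHyper X => (p.1, p.2.1)) :=
  continuous_fst.prodMk (continuous_subtype_val.comp continuous_snd)

end Aux

/-- Let `θ` be a topological partial action of a topological group `G` on a compact Hausdorff
space `X`, with enveloping space `X_G`, and let `F(X)_G` be the enveloping space of the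
induced partial action on the hyperspace `F(X)` of nonempty finite subsets of `X`.  Then
`F(X)_G` is `T1` if and only if `X_G` is `T1`. -/
theorem t1_envelopingSpace_finiteHyperspace_iff
    {G X : Type*} [Group G] [TopologicalSpace G] [IsTopologicalGroup G]
    [TopologicalSpace X] [CompactSpace X] [T2Space X]
    (θ : TopPartialAction G X) :
    T1Space (Quot (envRelF θ)) ↔ T1Space (Quot (envRel θ)) := by
  constructor
  · intro hF
    apply aux_t1_of_classes θ.envRel_equivalence
    rintro ⟨g, x⟩
    let sF : X → FinHyper X := fun y =>
      ⟨⟨{y}, isCompact_singleton, Set.singleton_nonempty y⟩, Set.finite_singleton y⟩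
    have hc : Continuous sF := by
      apply Continuous.subtype_mk
      rw [NCompact.instTopologicalSpace, continuous_generateFrom_iff]
      rintro s ⟨U, hU, rfl | rfl⟩
      · convert hU using 1
        ext y
        simp [Set.singleton_subset_iff]
      · convert hU using 1
        ext y
        simp
    have hσ : Continuous (fun p : G × X => (p.1, sF p.2)) :=
      continuous_fst.prodMk (hc.comp continuous_snd)
    have : {q : G × X | envRel θ (g, x) q} =
        (fun p : G × X => (p.1, sF p.2)) ⁻¹' {q | envRelF θ (g, sF x) q} := by
      ext ⟨h, y⟩
      simp only [Set.mem_setOf_eq, Set.mem_preimage, envRel, envRelF, sF,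
        Set.singleton_subset_iff, Set.image_singleton]
      constructor
      · rintro ⟨hd, hm⟩
        exact ⟨hd, by rw [hm]⟩
      · rintro ⟨hd, hm⟩
        exact ⟨hd, by simpa using hm⟩
    rw [this]
    exact (aux_isClosed_class θ.envRelF_equivalence _).preimage hσ
  · intro hX
    apply aux_t1_of_classes θ.envRelF_equivalence
    rintro ⟨g, A⟩
    have hfin : A.1.carrier.Finite := A.2
    set K : Set (G × X) := ⋃ x ∈ A.1.carrier, {q | envRel θ (g, x) q} with hK
    have hKc : IsClosed K :=
      hfin.isClosed_biUnion fun x _ => aux_isClosed_class θ.envRel_equivalence _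
    have : {q : G × FinHyper X | envRelF θ (g, A) q} =
        ((fun p : G × FinHyper X => (p.1, p.2.1)) ⁻¹'
          {p : G × NCompact X | ∀ b ∈ p.2.carrier, (p.1, b) ∈ K}) ∩
        ⋂ x ∈ A.1.carrier, (fun p : G × FinHyper X => (p.1, p.2.1)) ⁻¹'
          {p : G × NCompact X | ∃ b ∈ p.2.carrier, (p.1, b) ∈ {q | envRel θ (g, x) q}} := by
      ext ⟨h, B⟩
      simp only [Set.mem_setOf_eq, Set.mem_inter_iff, Set.mem_preimage, Set.mem_iInter,
        θ.envRelF_iff, hK, Set.mem_iUnion]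
      constructor
      · rintro ⟨h1, h2⟩
        exact ⟨fun b hb => by obtain ⟨x, hx, hr⟩ := h1 b hb; exact ⟨x, hx, hr⟩,
          fun x hx => h2 x hx⟩
      · rintro ⟨h1, h2⟩
        exact ⟨fun b hb => by obtain ⟨x, hx, hr⟩ := h1 b hb; exact ⟨x, hx, hr⟩,
          fun x hx => h2 x hx⟩
    rw [this]
    refine IsClosed.inter ((aux_isClosed_vforall hKc).preimage aux_continuous_val) ?_
    exact isClosed_biInter fun x _ =>
      ((aux_isClosed_vexists (aux_isClosed_class θ.envRel_equivalence _)).preimage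
        aux_continuous_val)
end
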